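/- Fix i ∈ I, an integer k ≥ 1 and an integer s with 0 ≤ s ≤ k−1. Let m_P be the monomial with m_P(i,2t) = 1 for 0 ≤ t ≤ k−1 and m_P = 0 at all other arguments, and set m = m_P − ∑_{t=s+1}^{k} A_{i,2t−1}. Then the monomial m + 𝟙_{(i,2k)} (i.e. the product m·Y_{i,q^{2k}}) is l-dominant if and only if s = k−1. -/
import Mathlib


open Finsupp

/-- The exponent function of the monomial
`A_{i,q^s} = Y_{i,q^{s+1}} Y_{i,q^{s-1}} ∏_{j ≠ i} Y_{j,q^s}^{C j i}`. -/
noncomputable def Amon {I : Type*} [Fintype I] [DecidableEq I]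
    (C : I → I → ℤ) (i : I) (s : ℤ) : (I × ℤ) →₀ ℤ :=
  Finsupp.single (i, s + 1) 1 + Finsupp.single (i, s - 1) 1 +
    ∑ j ∈ Finset.univ.erase i, Finsupp.single (j, s) (C j i)

lemma single_apply_self {I : Type*} [DecidableEq I] (i : I) (a b v : ℤ) :
    (Finsupp.single ((i, a) : I × ℤ) v) (i, b) = if a = b then v else 0 := by
  rw [Finsupp.single_apply]
  simp [Prod.ext_iff]

lemma single_apply_ne' {I : Type*} [DecidableEq I] (i j : I) (hij : j ≠ i) (a b v : ℤ) :
    (Finsupp.single ((i, a) : I × ℤ) v) (j, b) = 0 := by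
  rw [Finsupp.single_apply, if_neg]
  intro h
  exact hij (by simpa using (congrArg Prod.fst h).symm)

lemma Amon_apply_self {I : Type*} [Fintype I] [DecidableEq I]
    (C : I → I → ℤ) (i : I) (u r : ℤ) :
    Amon C i u (i, r) = (if u + 1 = r then 1 else 0) + (if u - 1 = r then 1 else 0) := by
  have h0 : (∑ j ∈ Finset.univ.erase i, Finsupp.single (j, u) (C j i)) (i, r) = 0 := by
    rw [Finsupp.finset_sum_apply]
    apply Finset.sum_eq_zero
    intro j hj
    rw [Finsupp.single_apply, if_neg]
    intro h
    exact (Finset.mem_erase.mp hj).1 (by simpa using congrArg Prod.fst h)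
  rw [Amon, Finsupp.add_apply, Finsupp.add_apply, h0, add_zero,
    single_apply_self, single_apply_self]

lemma Amon_apply_ne {I : Type*} [Fintype I] [DecidableEq I]
    (C : I → I → ℤ) (i j : I) (hij : j ≠ i) (u r : ℤ) :
    Amon C i u (j, r) = if u = r then C j i else 0 := by
  have h0 : (∑ j' ∈ Finset.univ.erase i, Finsupp.single (j', u) (C j' i)) (j, r)
      = if u = r then C j i else 0 := by
    rw [Finsupp.finset_sum_apply]
    have : ∀ j' ∈ Finset.univ.erase i,
        (Finsupp.single (j', u) (C j' i)) (j, r)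
          = if j' = j then (if u = r then C j' i else 0) else 0 := by
      intro j' _
      rw [Finsupp.single_apply]
      by_cases h1 : j' = j <;> by_cases h2 : u = r <;>
        simp [Prod.ext_iff, h1, h2]
    rw [Finset.sum_congr rfl this, Finset.sum_ite_eq']
    simp [hij]
  rw [Amon, Finsupp.add_apply, Finsupp.add_apply, h0,
    single_apply_ne' i j hij, single_apply_ne' i j hij, zero_add, zero_add]

lemma sum_ite_eq_of (S : Finset ℤ) (P : ℤ → Prop) [DecidablePred P] (t0 v : ℤ)
    (h : ∀ t, P t ↔ t = t0) :
    ∑ t ∈ S, (if P t then v else 0) = if t0 ∈ S then v else 0 := by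
  simp_rw [h]
  exact Finset.sum_ite_eq' S t0 (fun _ => v)

/-- For `0 ≤ s ≤ k-1` and
`m = Y_{i,q^0} ⋯ Y_{i,q^{2k-2}} · ∏_{t=s+1}^{k} A_{i,q^{2t-1}}^{-1}`,
the monomial `m · Y_{i,q^{2k}}` is l-dominant iff `s = k - 1`. -/
theorem KR_monomial_lDominant_iff {I : Type*} [Fintype I] [DecidableEq I]
    (C : I → I → ℤ)
    (hsym : ∀ i j, C i j = C j i)
    (hdiag : ∀ i, C i i = 2)
    (hoff : ∀ i j, i ≠ j → C i j = 0 ∨ C i j = -1)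
    (i : I) (k s : ℤ) (hk : 1 ≤ k) (hs0 : 0 ≤ s) (hs : s ≤ k - 1)
    (mP m : (I × ℤ) →₀ ℤ)
    (hmP : mP = ∑ t ∈ Finset.Icc (0 : ℤ) (k - 1), Finsupp.single (i, 2 * t) 1)
    (hm : m = mP - ∑ t ∈ Finset.Icc (s + 1) k, Amon C i (2 * t - 1)) :
    (∀ p : I × ℤ, 0 ≤ ((m + Finsupp.single (i, 2 * k) 1 : (I × ℤ) →₀ ℤ)) p) ↔ s = k - 1 := by
  subst hm hmP
  constructor
  · intro h
    by_contra hne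
    have hs1 : s + 1 ≤ k - 1 := by omega
    have hv := h (i, 2 * s + 2)
    rw [Finsupp.add_apply, Finsupp.sub_apply, Finsupp.finset_sum_apply,
      Finsupp.finset_sum_apply] at hv
    simp_rw [single_apply_self, Amon_apply_self] at hv
    rw [sum_ite_eq_of _ _ (s + 1) 1 (by omega : ∀ t, 2 * t = 2 * s + 2 ↔ t = s + 1),
      Finset.sum_add_distrib,
      sum_ite_eq_of _ _ (s + 1) 1 (by omega : ∀ t, 2 * t - 1 + 1 = 2 * s + 2 ↔ t = s + 1),
      sum_ite_eq_of _ _ (s + 2) 1 (by omega : ∀ t, 2 * t - 1 - 1 = 2 * s + 2 ↔ t = s + 2)]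
      at hv
    have m1 : (s + 1) ∈ Finset.Icc (0 : ℤ) (k - 1) := by rw [Finset.mem_Icc]; omega
    have m2 : (s + 1) ∈ Finset.Icc (s + 1) k := by rw [Finset.mem_Icc]; omega
    have m3 : (s + 2) ∈ Finset.Icc (s + 1) k := by rw [Finset.mem_Icc]; omega
    rw [if_pos m1, if_pos m2, if_pos m3] at hv
    split_ifs at hv <;> omega
  · intro hsk p
    obtain ⟨j, r⟩ := p
    rw [Finsupp.add_apply, Finsupp.sub_apply, Finsupp.finset_sum_apply,
      Finsupp.finset_sum_apply]
    by_cases hji : j = i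
    · subst hji
      simp_rw [single_apply_self, Amon_apply_self]
      subst hsk
      have hIcc : Finset.Icc (k - 1 + 1) k = {k} := by
        rw [show k - 1 + 1 = k by ring, Finset.Icc_self]
      rw [hIcc, Finset.sum_singleton]
      by_cases hr : 2 * (k - 1) = r
      · rw [sum_ite_eq_of _ _ (k - 1) 1 (by omega : ∀ t, 2 * t = r ↔ t = k - 1),
          if_pos (by rw [Finset.mem_Icc]; omega : (k - 1) ∈ Finset.Icc (0 : ℤ) (k - 1))]
        split_ifs <;> omega
      · have hS : 0 ≤ ∑ t ∈ Finset.Icc (0 : ℤ) (k - 1), (if 2 * t = r then (1 : ℤ) else 0) :=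
          Finset.sum_nonneg (fun t _ => by positivity)
        have h2 : (if 2 * k - 1 - 1 = r then (1 : ℤ) else 0) = 0 := if_neg (by omega)
        rw [h2]
        split_ifs <;> omega
    · simp_rw [single_apply_ne' i j hji, Amon_apply_ne C i j hji, Finset.sum_const_zero]
      have hX : ∑ t ∈ Finset.Icc (s + 1) k, (if 2 * t - 1 = r then C j i else 0) ≤ 0 :=
        Finset.sum_nonpos (fun t _ => by
          rcases hoff j i hji with h | h <;> split_ifs <;> omega)
      omega
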